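/- arXiv:2206.12593 — 5 statements merged into one kernel-verified Lean document; each statement's English description precedes it below -/
import Mathlib

section
/- If C is a minimal linear code of length n and dimension k over F_q, then n ≥ (k-1)(q+1). -/
open Module Submodule Finset

attribute [local instance] Classical.propDecidable

set_option synthInstance.maxHeartbeats 1000000
set_option maxHeartbeats 4000000

section Blocking
variable {F : Type*} [Field F] {Y : Type*} [AddCommGroup Y] [Module F Y]
  [FiniteDimensional F Y] {ι : Type*} [DecidableEq ι]

/-- If a finite family spans a nontrivial space `Y` and every kernel-hyperplane of `Y`
contains at least `t` members of the family, then the family has ≥ `finrank Y + t` members. -/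
lemma blocking_count (hY : 0 < Module.finrank F Y) :
    ∀ (t : ℕ) (I : Finset ι) (v : ι → Y), Submodule.span F (v '' I) = ⊤ →
    (∀ ψ : Y →ₗ[F] F, ψ ≠ 0 →
        t ≤ (I.filter fun i => v i ∈ LinearMap.ker ψ).card) →
    Module.finrank F Y + t ≤ I.card := by
  intro t
  induction t with
  | zero =>
    intro I v hspan _
    have h1 : Module.finrank F Y = Module.finrank F (Submodule.span F (v '' I)) := by
      rw [hspan, finrank_top]
    have h2 : (v '' I : Set Y) = ((I.image v : Finset Y) : Set Y) := by
      simp [Finset.coe_image]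
    have h3 : Module.finrank F (Submodule.span F (v '' I)) ≤ (I.image v).card := by
      rw [h2]; exact finrank_span_finset_le_card _
    simpa using h1 ▸ (h3.trans (Finset.card_image_le))
  | succ t ih =>
    intro I v hspan hblock
    by_cases hex : ∃ i₀ ∈ I, Submodule.span F (v '' (I.erase i₀)) = ⊤
    · obtain ⟨i₀, hi₀, hsp⟩ := hex
      have hb : ∀ ψ : Y →ₗ[F] F, ψ ≠ 0 →
          t ≤ ((I.erase i₀).filter fun i => v i ∈ LinearMap.ker ψ).card := by
        intro ψ hψ
        have := hblock ψ hψ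
        have hfe : (I.erase i₀).filter (fun i => v i ∈ LinearMap.ker ψ)
            = (I.filter fun i => v i ∈ LinearMap.ker ψ).erase i₀ := by
          ext x; simp [Finset.mem_erase, Finset.mem_filter]; tauto
        rw [hfe]
        have := Finset.card_erase_le (s := I.filter fun i => v i ∈ LinearMap.ker ψ) (a := i₀)
        have h2 : (I.filter fun i => v i ∈ LinearMap.ker ψ).card - 1
            ≤ ((I.filter fun i => v i ∈ LinearMap.ker ψ).erase i₀).card :=
          Finset.pred_card_le_card_erase
        omega
      have := ih (I.erase i₀) v hsp hb
      have hcard : (I.erase i₀).card = I.card - 1 := Finset.card_erase_of_mem hi₀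
      have : 1 ≤ I.card := Finset.card_pos.2 ⟨i₀, hi₀⟩
      omega
    · push_neg at hex
      -- the family over I is linearly independent
      have hind : LinearIndependent F (fun i : {x // x ∈ I} => v i) := by
        rw [linearIndependent_iff_notMem_span]
        intro i hmem
        apply hex i.1 i.2
        have himg : (fun i : {x // x ∈ I} => v i) '' (Set.univ \ {i}) ⊆ v '' (I.erase i.1) := by
          rintro y ⟨j, hj, rfl⟩
          exact ⟨j.1, Finset.mem_erase.2 ⟨fun h => hj.2 (by ext; exact h), j.2⟩, rfl⟩
        have h1 : v i.1 ∈ Submodule.span F (v '' (I.erase i.1)) :=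
          Submodule.span_mono himg hmem
        have h2 : (v '' I : Set Y) = insert (v i.1) (v '' (I.erase i.1)) := by
          rw [← Set.image_insert_eq, ← Finset.coe_insert, Finset.insert_erase i.2]
        rw [← hspan, h2, Submodule.span_insert_eq_span h1]
      have hsp2 : ⊤ ≤ Submodule.span F (Set.range (fun i : {x // x ∈ I} => v i)) := by
        rw [← hspan]
        apply Submodule.span_mono
        rintro y ⟨j, hj, rfl⟩
        exact ⟨⟨j, hj⟩, rfl⟩
      let b : Basis {x // x ∈ I} F Y := Basis.mk hind hsp2
      have hb1 : ∀ i (h : i ∈ I), b.sumCoords (v i) = 1 := by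
        intro i h
        have : v i = b ⟨i, h⟩ := by simp [b, Basis.mk_apply]
        rw [this, Basis.sumCoords_self_apply]
      have hIne : I.Nonempty := by
        rcases I.eq_empty_or_nonempty with h | h
        · exfalso
          rw [h] at hspan
          simp only [Finset.coe_empty, Set.image_empty, Submodule.span_empty] at hspan
          have : Module.finrank F Y = 0 := by
            rw [← finrank_top F Y, ← hspan, finrank_bot]
          omega
        · exact h
      obtain ⟨i₀, hi₀⟩ := hIne
      have hψne : b.sumCoords ≠ 0 := by
        intro h
        have := hb1 i₀ hi₀
        rw [h] at this
        simp at this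
      have := hblock b.sumCoords hψne
      have hempty : (I.filter fun i => v i ∈ LinearMap.ker b.sumCoords) = ∅ := by
        apply Finset.filter_false_of_mem
        intro i hi
        simp only [LinearMap.mem_ker]
        rw [hb1 i hi]
        exact one_ne_zero
      rw [hempty] at this
      simp at this

end Blocking

section Aux
variable {F : Type*} [Field F] {W : Type*} [AddCommGroup W] [Module F W]
  [FiniteDimensional F W]

omit [FiniteDimensional F W] in
lemma range_eq_top_of_ne_zero {g : W →ₗ[F] F} (hg : g ≠ 0) : LinearMap.range g = ⊤ := by
  obtain ⟨x, hx⟩ : ∃ x, g x ≠ 0 := by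
    by_contra h
    push_neg at h
    exact hg (by ext y; simp [h y])
  rw [eq_top_iff]
  intro y _
  exact ⟨(y * (g x)⁻¹) • x, by simp [mul_assoc, inv_mul_cancel₀ hx]⟩

lemma finrank_ker_functional {g : W →ₗ[F] F} (hg : g ≠ 0) :
    Module.finrank F (LinearMap.ker g) + 1 = Module.finrank F W := by
  have h := LinearMap.finrank_range_add_finrank_ker g
  rw [range_eq_top_of_ne_zero hg] at h
  rw [finrank_top] at h
  have h1 : Module.finrank F F = 1 := Module.finrank_self F
  omega

lemma exists_functional_of_corank_one (H : Submodule F W)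
    (hH : Module.finrank F H + 1 = Module.finrank F W) :
    ∃ f : W →ₗ[F] F, f ≠ 0 ∧ LinearMap.ker f = H := by
  have hq : Module.finrank F (W ⧸ H) = 1 := by
    have := Submodule.finrank_quotient_add_finrank H
    omega
  let b : Basis (Fin 1) F (W ⧸ H) := Module.finBasisOfFinrankEq F (W ⧸ H) hq
  let g : (W ⧸ H) →ₗ[F] F := b.coord 0
  have hker_g : ∀ y, g y = 0 → y = 0 := by
    intro y hy
    have hrep : y = (b.repr y 0) • b 0 := by
      have := b.sum_repr y
      rw [Fin.sum_univ_one] at this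
      exact this.symm
    have : b.repr y 0 = 0 := by simpa [g, Basis.coord_apply] using hy
    rw [hrep, this, zero_smul]
  refine ⟨g.comp H.mkQ, ?_, ?_⟩
  · have hHne : H ≠ ⊤ := by
      intro h
      rw [h, finrank_top] at hH
      omega
    obtain ⟨x, -, hx⟩ := SetLike.exists_of_lt (show H < ⊤ from lt_top_iff_ne_top.2 hHne)
    intro h0
    have : g (H.mkQ x) = 0 := by
      have := congrFun (congrArg (fun (f : W →ₗ[F] F) => (f : W → F)) h0) x
      simpa using this
    exact hx ((Submodule.Quotient.mk_eq_zero H).1 (hker_g _ this))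
  · ext x
    simp only [LinearMap.mem_ker, LinearMap.comp_apply]
    constructor
    · intro h
      exact (Submodule.Quotient.mk_eq_zero H).1 (hker_g _ h)
    · intro h
      have : H.mkQ x = 0 := (Submodule.Quotient.mk_eq_zero H).2 h
      rw [this, map_zero]

/-- The pencil of `q+1` hyperplanes through a codimension-2 subspace. -/
lemma exists_pencil (T : Submodule F W) (hT : Module.finrank F T + 2 = Module.finrank F W) :
    ∃ H : Option F → Submodule F W,
      (∀ j, T ≤ H j) ∧
      (∀ j, Module.finrank F (H j) + 1 = Module.finrank F W) ∧
      (∀ j j', j ≠ j' → H j ⊓ H j' ≤ T) := by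
  have hq : Module.finrank F (W ⧸ T) = 2 := by
    have := Submodule.finrank_quotient_add_finrank T
    omega
  let b : Basis (Fin 2) F (W ⧸ T) := Module.finBasisOfFinrankEq F (W ⧸ T) hq
  let u : W ⧸ T := b 0
  let v : W ⧸ T := b 1
  have hcomb : ∀ s s' : F, s • u + s' • v = 0 → s = 0 ∧ s' = 0 := by
    intro s s' h
    have h2 := (Fintype.linearIndependent_iff.1 b.linearIndependent) ![s, s']
    have hsum : ∑ i, (![s, s'] i) • b i = s • u + s' • v := by
      rw [Fin.sum_univ_two]; rfl
    have h3 := h2 (by rw [hsum]; exact h)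
    exact ⟨h3 0, h3 1⟩
  let ℓ : Option F → Submodule F (W ⧸ T) := fun j =>
    match j with
    | none => Submodule.span F {v}
    | some a => Submodule.span F {u + a • v}
  have hvne : v ≠ 0 := b.ne_zero 1
  have huane : ∀ a : F, u + a • v ≠ 0 := by
    intro a h
    have := hcomb 1 a (by rw [one_smul]; exact h)
    exact one_ne_zero this.1
  have hℓrank : ∀ j, Module.finrank F (ℓ j) = 1 := by
    intro j
    match j with
    | none => exact finrank_span_singleton hvne
    | some a => exact finrank_span_singleton (huane a)
  have hℓdisj : ∀ j j', j ≠ j' → ∀ x, x ∈ ℓ j → x ∈ ℓ j' → x = 0 := by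
    intro j j' hne x hx hx'
    match j, j' with
    | none, none => exact absurd rfl hne
    | none, some a =>
      obtain ⟨s, rfl⟩ := Submodule.mem_span_singleton.1 hx
      obtain ⟨s', hs'⟩ := Submodule.mem_span_singleton.1 hx'
      have hs'2 : s' • u + (s' * a) • v = s • v := by
        rw [smul_add, smul_smul] at hs'; exact hs'
      have h0 : s' • u + (s' * a - s) • v = 0 := by
        calc s' • u + (s' * a - s) • v = (s' • u + (s' * a) • v) - s • v := by
              rw [sub_smul]; abel
        _ = 0 := sub_eq_zero_of_eq hs'2
      obtain ⟨h1, h2⟩ := hcomb _ _ h0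
      have hs0 : s = 0 := by
        rw [h1] at h2; simpa using h2.symm
      rw [hs0, zero_smul]
    | some a, none =>
      obtain ⟨s, rfl⟩ := Submodule.mem_span_singleton.1 hx
      obtain ⟨s', hs'⟩ := Submodule.mem_span_singleton.1 hx'
      have hs'2 : s' • v = s • u + (s * a) • v := by
        rw [← smul_smul, ← smul_add]; exact hs'
      have h0 : s • u + (s * a - s') • v = 0 := by
        calc s • u + (s * a - s') • v = (s • u + (s * a) • v) - s' • v := by
              rw [sub_smul]; abel
        _ = 0 := by rw [← hs'2]; abel
      obtain ⟨h1, -⟩ := hcomb _ _ h0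
      rw [h1, zero_smul]
    | some a, some a' =>
      obtain ⟨s, rfl⟩ := Submodule.mem_span_singleton.1 hx
      obtain ⟨s', hs'⟩ := Submodule.mem_span_singleton.1 hx'
      have haa : a ≠ a' := by
        intro h; exact hne (by rw [h])
      have hs'2 : s' • u + (s' * a') • v = s • u + (s * a) • v := by
        rw [← smul_smul, ← smul_smul, ← smul_add, ← smul_add]; exact hs'
      have h0 : (s - s') • u + (s * a - s' * a') • v = 0 := by
        calc (s - s') • u + (s * a - s' * a') • v
            = (s • u + (s * a) • v) - (s' • u + (s' * a') • v) := by
              rw [sub_smul, sub_smul]; abel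
        _ = 0 := by rw [hs'2]; abel
      obtain ⟨h1, h2⟩ := hcomb _ _ h0
      have hss : s = s' := sub_eq_zero.1 h1
      have h3 : s * (a - a') = 0 := by
        rw [mul_sub]; rw [← hss] at h2; exact h2
      rcases mul_eq_zero.1 h3 with h4 | h4
      · rw [h4, zero_smul]
      · exact absurd (sub_eq_zero.1 h4) haa
  refine ⟨fun j => (ℓ j).comap T.mkQ, ?_, ?_, ?_⟩
  · intro j x hx
    have : T.mkQ x = 0 := (Submodule.Quotient.mk_eq_zero T).2 hx
    simp only [Submodule.mem_comap, this]
    exact zero_mem _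
  · intro j
    show Module.finrank F ((ℓ j).comap T.mkQ) + 1 = Module.finrank F W
    set Hj := (ℓ j).comap T.mkQ with hHj
    have hle : T ≤ Hj := by
      intro x hx
      have : T.mkQ x = 0 := (Submodule.Quotient.mk_eq_zero T).2 hx
      simp only [hHj, Submodule.mem_comap, this]
      exact zero_mem _
    let g : Hj →ₗ[F] (W ⧸ T) := T.mkQ.comp Hj.subtype
    have hrn := LinearMap.finrank_range_add_finrank_ker g
    have hrange : LinearMap.range g = ℓ j := by
      have h1 : LinearMap.range g = Submodule.map T.mkQ Hj := by
        rw [LinearMap.range_comp, Submodule.range_subtype]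
      rw [h1, hHj, Submodule.map_comap_eq, Submodule.range_mkQ, top_inf_eq]
    have hker : LinearMap.ker g = Submodule.comap Hj.subtype T := by
      rw [LinearMap.ker_comp, Submodule.ker_mkQ]
    have hkerrank : Module.finrank F (LinearMap.ker g) = Module.finrank F T := by
      rw [hker]
      exact LinearEquiv.finrank_eq (Submodule.comapSubtypeEquivOfLe hle)
    rw [hrange, hkerrank, hℓrank j] at hrn
    omega
  · intro j j' hne x hx
    obtain ⟨hx1, hx2⟩ := Submodule.mem_inf.1 hx
    have h0 : T.mkQ x = 0 :=
      hℓdisj j j' hne _ (Submodule.mem_comap.1 hx1) (Submodule.mem_comap.1 hx2)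
    exact (Submodule.Quotient.mk_eq_zero T).1 h0

end Aux

theorem abstract_cutting_bound {F : Type*} [Field F] [Fintype F]
    {W : Type*} [AddCommGroup W] [Module F W] [FiniteDimensional F W]
    {k n : ℕ} (hWrank : Module.finrank F W = k) (hk1 : 1 < k)
    (ε : Fin n → W)
    (hcut : ∀ H : Submodule F W, Module.finrank F H + 1 = k →
      Submodule.span F (ε '' {i | ε i ∈ H}) = H) :
    (k - 1) * (Fintype.card F + 1) ≤ n := by
  classical
  -- a codimension-2 subspace exists
  have hT0 : ∃ T : Submodule F (W), Module.finrank F T = k - 2 := by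
    let bW : Basis (Fin k) F (W) :=
      Module.finBasisOfFinrankEq F (W) hWrank
    have hc2 : k - 2 ≤ k := by omega
    have hinj : Function.Injective (Fin.castLE hc2) := Fin.castLE_injective hc2
    have hli : LinearIndependent F (fun j : Fin (k - 2) => bW (Fin.castLE hc2 j)) :=
      bW.linearIndependent.comp _ hinj
    refine ⟨Submodule.span F (Set.range fun j : Fin (k - 2) => bW (Fin.castLE hc2 j)), ?_⟩
    rw [finrank_span_eq_card hli]
    simp
  set count : Submodule F (W) → ℕ :=
    fun U => (univ.filter fun i => ε i ∈ U).card with hcount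
  have hPne : {m | ∃ T : Submodule F (W),
      Module.finrank F T = k - 2 ∧ count T = m}.Nonempty := by
    obtain ⟨T, hT⟩ := hT0
    exact ⟨count T, T, hT, rfl⟩
  set t := sInf {m | ∃ T : Submodule F (W),
      Module.finrank F T = k - 2 ∧ count T = m} with ht
  obtain ⟨T, hTrank, hTcount⟩ := Nat.sInf_mem hPne
  have hmin_t : ∀ U : Submodule F (W),
      Module.finrank F U = k - 2 → t ≤ count U := by
    intro U hU
    exact Nat.sInf_le ⟨U, hU, rfl⟩
  obtain ⟨H, hTH, hHrank, hHdisj⟩ := exists_pencil T (by rw [hWrank]; omega)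
  -- each hyperplane of the pencil contains at least (k-1) + t coordinate functionals
  have hsec : ∀ j, (k - 1) + t ≤ count (H j) := by
    intro j
    have hYrank : Module.finrank F (H j) = k - 1 := by
      have := hHrank j; rw [hWrank] at this; omega
    set I : Finset (Fin n) := univ.filter (fun i => ε i ∈ H j) with hI
    set v : Fin n → ↥(H j) := fun i => if h : ε i ∈ H j then ⟨ε i, h⟩ else 0 with hv
    have himg : (H j).subtype '' (v '' I) = ε '' {i | ε i ∈ H j} := by
      ext y
      constructor
      · rintro ⟨z, ⟨i, hiI, rfl⟩, rfl⟩
        have hiI2 : i ∈ I := Finset.mem_coe.1 hiI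
        rw [hI] at hiI2
        have hiH : ε i ∈ H j := (Finset.mem_filter.1 hiI2).2
        exact ⟨i, hiH, by rw [hv]; dsimp only; rw [dif_pos hiH]; rfl⟩
      · rintro ⟨i, hiH, rfl⟩
        simp only [Set.mem_setOf_eq] at hiH
        refine ⟨v i, ⟨i, ?_, rfl⟩, by rw [hv]; dsimp only; rw [dif_pos hiH]; rfl⟩
        apply Finset.mem_coe.2
        rw [hI]
        exact Finset.mem_filter.2 ⟨Finset.mem_univ i, hiH⟩
    have hspan : Submodule.span F (v '' I) = ⊤ := by
      apply Submodule.map_injective_of_injective (Submodule.injective_subtype (H j))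
      rw [Submodule.map_span, himg, Submodule.map_subtype_top]
      exact hcut (H j) (by have := hHrank j; rw [hWrank] at this; exact this)
    have hblock : ∀ ψ : ↥(H j) →ₗ[F] F, ψ ≠ 0 →
        t ≤ (I.filter fun i => v i ∈ LinearMap.ker ψ).card := by
      intro ψ hψ
      have hkerr : Module.finrank F (LinearMap.ker ψ) + 1 = k - 1 := by
        rw [← hYrank]; exact finrank_ker_functional hψ
      set U := Submodule.map (H j).subtype (LinearMap.ker ψ) with hU
      have hUrank : Module.finrank F U = k - 2 := by
        rw [hU, Submodule.finrank_map_subtype_eq]; omega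
      have hle := hmin_t U hUrank
      have hfil : (univ.filter fun i => ε i ∈ U) = (I.filter fun i => v i ∈ LinearMap.ker ψ) := by
        ext i
        constructor
        · intro hUm
          have hUm2 : ε i ∈ U := (Finset.mem_filter.1 hUm).2
          obtain ⟨y, hy, hyeq⟩ := Submodule.mem_map.1 hUm2
          have hiH : ε i ∈ H j := by rw [← hyeq]; exact y.2
          refine Finset.mem_filter.2 ⟨?_, ?_⟩
          · rw [hI]; exact Finset.mem_filter.2 ⟨Finset.mem_univ i, hiH⟩
          · have hvy : v i = y := Subtype.ext (by
              rw [hv]; dsimp only; rw [dif_pos hiH]; exact hyeq.symm)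
            rw [hvy]; exact hy
        · intro hm
          obtain ⟨hiI, hker⟩ := Finset.mem_filter.1 hm
          rw [hI] at hiI
          have hiH : ε i ∈ H j := (Finset.mem_filter.1 hiI).2
          refine Finset.mem_filter.2 ⟨Finset.mem_univ i, ?_⟩
          exact Submodule.mem_map.2 ⟨v i, hker, by rw [hv]; dsimp only; rw [dif_pos hiH]; rfl⟩
      rw [← hfil]
      exact hle
    have hfinal := blocking_count (by omega : 0 < Module.finrank F (H j)) t I v hspan hblock
    rw [hYrank] at hfinal
    exact hfinal
  -- counting
  set B : Finset (Fin n) := univ.filter (fun i => ε i ∈ T) with hB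
  have hBcard : B.card = t := hTcount
  set A : Option F → Finset (Fin n) :=
    fun j => (univ.filter fun i => ε i ∈ H j) \ B with hA
  have hBsub : ∀ j, B ⊆ univ.filter (fun i => ε i ∈ H j) := by
    intro j i hi
    have : ε i ∈ T := (Finset.mem_filter.1 hi).2
    exact Finset.mem_filter.2 ⟨Finset.mem_univ i, hTH j this⟩
  have hBt : B.card = t := by
    rw [← ht] at hTcount
    exact hTcount
  have hAcard : ∀ j, k - 1 ≤ (A j).card := by
    intro j
    rw [hA]
    rw [Finset.card_sdiff_of_subset (hBsub j)]
    have h1 := hsec j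
    have h2 : count (H j) = (univ.filter fun i => ε i ∈ H j).card := rfl
    rw [h2] at h1
    omega
  have hAdisjoint : ∀ j j', j ≠ j' → Disjoint (A j) (A j') := by
    intro j j' hne
    rw [Finset.disjoint_left]
    intro i hij hij'
    have h1 : ε i ∈ H j := (Finset.mem_filter.1 (Finset.mem_sdiff.1 hij).1).2
    have h2 : ε i ∈ H j' := (Finset.mem_filter.1 (Finset.mem_sdiff.1 hij').1).2
    have hT' : ε i ∈ T := hHdisj j j' hne (Submodule.mem_inf.2 ⟨h1, h2⟩)
    exact (Finset.mem_sdiff.1 hij).2 (Finset.mem_filter.2 ⟨Finset.mem_univ i, hT'⟩)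
  have hBA : ∀ j, Disjoint B (A j) := by
    intro j
    rw [hA]
    exact Finset.disjoint_sdiff
  have htot : B.card + ∑ j : Option F, (A j).card ≤ n := by
    have h1 : (univ.biUnion A).card = ∑ j, (A j).card :=
      Finset.card_biUnion (fun j _ j' _ h => hAdisjoint j j' h)
    have h2 : (B ∪ univ.biUnion A).card = B.card + (univ.biUnion A).card :=
      Finset.card_union_of_disjoint
        ((Finset.disjoint_biUnion_right _ _ _).2 fun j _ => hBA j)
    have h3 : (B ∪ univ.biUnion A).card ≤ n := by
      have := Finset.card_le_card (Finset.subset_univ (B ∪ univ.biUnion A))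
      simpa using this
    omega
  have hsum : (Fintype.card F + 1) * (k - 1) ≤ ∑ j : Option F, (A j).card := by
    calc (Fintype.card F + 1) * (k - 1)
        = ∑ _j : Option F, (k - 1) := by
          rw [Finset.sum_const, Finset.card_univ, Fintype.card_option, smul_eq_mul]
    _ ≤ ∑ j : Option F, (A j).card := Finset.sum_le_sum (fun j _ => hAcard j)
  calc (k - 1) * (Fintype.card F + 1) = (Fintype.card F + 1) * (k - 1) := mul_comm _ _
  _ ≤ ∑ j : Option F, (A j).card := hsum
  _ ≤ B.card + ∑ j : Option F, (A j).card := by omega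
  _ ≤ n := htot


/-- If `C` is a minimal linear code of length `n` and dimension `k` over a finite field
with `q` elements, then `n ≥ (k-1)(q+1)`. -/
theorem minimal_code_length_bound (F : Type*) [Field F] [Fintype F] (n : ℕ)
    (C : Submodule F (Fin n → F))
    (hmin : ∀ c ∈ C, c ≠ 0 → ∀ c' ∈ C, {i | c' i ≠ 0} ⊆ {i | c i ≠ 0} →
      ∃ a : F, c' = a • c) :
    (Module.finrank F C - 1) * (Fintype.card F + 1) ≤ n := by
  classical
  by_cases hk1 : Module.finrank F C ≤ 1
  · have h0 : Module.finrank F C - 1 = 0 := by omega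
    rw [h0, zero_mul]
    exact Nat.zero_le n
  push_neg at hk1
  set k := Module.finrank F C with hk
  haveI : FiniteDimensional F C := FiniteDimensional.finiteDimensional_submodule C
  haveI : FiniteDimensional F (Module.Dual F C) := inferInstance
  have hWrank : Module.finrank F (Module.Dual F C) = k := Subspace.dual_finrank_eq
  set ε : Fin n → Module.Dual F C := fun i => (LinearMap.proj i).comp C.subtype with hε
  -- cutting: every hyperplane of the dual is spanned by the coordinate functionals inside it
  have hcut : ∀ H : Submodule F (Module.Dual F C), Module.finrank F H + 1 = k →
      Submodule.span F (ε '' {i | ε i ∈ H}) = H := by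
    intro H hH
    obtain ⟨f, hf0, hfker⟩ := exists_functional_of_corank_one H (by rw [hWrank]; exact hH)
    set c : C := (Module.evalEquiv F C).symm f with hc
    have hcne : c ≠ 0 := by
      intro h
      apply hf0
      have h1 : (Module.evalEquiv F C) c = f := LinearEquiv.apply_symm_apply _ _
      have h2 : (Module.evalEquiv F C) (0 : C) = 0 := by simp
      rw [h, h2] at h1
      exact h1.symm
    have happ : ∀ i, f (ε i) = (c : Fin n → F) i := by
      intro i
      have h1 : (ε i) ((Module.evalEquiv F C).symm f) = f (ε i) :=
        Module.apply_evalEquiv_symm_apply F C (ε i) f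
      rw [← hc] at h1
      exact h1.symm
    have hsets : {i | ε i ∈ H} = {i | (c : Fin n → F) i = 0} := by
      ext i
      rw [← hfker]
      simp only [Set.mem_setOf_eq, LinearMap.mem_ker, happ i]
    rw [hsets, ← hfker]
    -- now show span of the coordinate functionals vanishing on c equals ker f
    set S := Submodule.span F (ε '' {i | (c : Fin n → F) i = 0}) with hSdef
    have hS_le : S ≤ LinearMap.ker f := by
      rw [hSdef, Submodule.span_le]
      rintro φ ⟨i, hi, rfl⟩
      simp only [SetLike.mem_coe, LinearMap.mem_ker, happ i]
      exact hi
    refine le_antisymm hS_le ?_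
    by_contra hnot
    have hlt : S < LinearMap.ker f := lt_of_le_of_ne hS_le (by
      intro h; exact hnot (le_of_eq h.symm))
    have hkerrank : Module.finrank F (LinearMap.ker f) + 1 = k := by
      have := finrank_ker_functional hf0
      rw [hWrank] at this
      exact this
    have hSrank : Module.finrank F S < Module.finrank F (LinearMap.ker f) :=
      Submodule.finrank_strictMono hlt
    have hcoann := Subspace.finrank_add_finrank_dualCoannihilator_eq S
    have hcoann2 : 2 ≤ Module.finrank F S.dualCoannihilator := by
      rw [← hk] at hcoann
      omega
    have hspanc : Module.finrank F (Submodule.span F {c}) = 1 :=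
      finrank_span_singleton hcne
    have hnotle : ¬ (S.dualCoannihilator ≤ Submodule.span F {c}) := by
      intro hle
      have := Submodule.finrank_mono hle
      rw [hspanc] at this
      omega
    obtain ⟨c', hc'mem, hc'notin⟩ := SetLike.not_le_iff_exists.1 hnotle
    have hzero : ∀ i, (c : Fin n → F) i = 0 → (c' : Fin n → F) i = 0 := by
      intro i hi
      have hφ : ε i ∈ S := Submodule.subset_span ⟨i, hi, rfl⟩
      exact (Submodule.mem_dualCoannihilator _).1 hc'mem (ε i) hφ
    have hsupp : {i | (c' : Fin n → F) i ≠ 0} ⊆ {i | (c : Fin n → F) i ≠ 0} := by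
      intro i hi
      simp only [Set.mem_setOf_eq] at hi ⊢
      intro h
      exact hi (hzero i h)
    have hcoe_ne : (c : Fin n → F) ≠ 0 := by
      intro h
      exact hcne (Subtype.ext h)
    obtain ⟨a, ha⟩ := hmin (c : Fin n → F) c.2 hcoe_ne (c' : Fin n → F) c'.2 hsupp
    apply hc'notin
    rw [Submodule.mem_span_singleton]
    exact ⟨a, Subtype.ext (by simp only [SetLike.val_smul]; exact ha.symm)⟩
  exact abstract_cutting_bound hWrank hk1 ε hcut
end

section
/- A non-degenerate [n,k]_q linear code C with generator matrix G = (G_1, ..., G_n) is minimal if and only if the multiset of points {G_1, ..., G_n} in PG(k-1,q) is a strong blocking set, i.e., for every hyperplane σ of PG(k-1,q), the intersection of σ with the point set spans σ. -/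
open Module Submodule

private lemma coeff_unique {F : Type*} [Field F] {n k : ℕ} {G : Fin k → Fin n → F}
    (hindep : LinearIndependent F G) {w w' : Fin k → F}
    (h : ∑ i, w i • G i = ∑ i, w' i • G i) : w = w' := by
  have h0 : ∑ i, (w - w') i • G i = 0 := by
    simp [sub_smul, Finset.sum_sub_distrib, h]
  have := Fintype.linearIndependent_iff.mp hindep (w - w') h0
  funext i
  have hi := this i
  simpa [sub_eq_zero] using hi

/-- The codeword associated to a functional `θ` equals the corresponding
linear combination of the rows of `G`. -/
private lemma cw_eq {F : Type*} [Field F] {n k : ℕ} (G : Matrix (Fin k) (Fin n) F)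
    (θ : (Fin k → F) →ₗ[F] F) :
    (fun j => θ (fun i => G i j)) =
      ∑ i, θ (fun j => if i = j then (1 : F) else 0) • G i := by
  funext j
  rw [Finset.sum_apply]
  rw [LinearMap.pi_apply_eq_sum_univ θ (fun i => G i j)]
  simp [mul_comm]

private lemma functional_eq_smul {F : Type*} [Field F] {k : ℕ}
    {θ φ : (Fin k → F) →ₗ[F] F} {a : F}
    (h : ∀ i, θ (fun j => if i = j then (1 : F) else 0) =
      a * φ (fun j => if i = j then (1 : F) else 0)) : θ = a • φ := by
  refine LinearMap.ext fun v => ?_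
  rw [LinearMap.pi_apply_eq_sum_univ θ v, LinearMap.smul_apply,
    LinearMap.pi_apply_eq_sum_univ φ v, Finset.smul_sum]
  refine Finset.sum_congr rfl fun i _ => ?_
  rw [h i]
  simp only [smul_eq_mul]
  ring

/-- A non-degenerate `[n,k]_q` code with generator matrix `G` is minimal iff the columns
of `G`, viewed as points of `PG(k-1,q)`, form a strong blocking set: every hyperplane is
spanned by the columns lying in it. -/
theorem minimal_code_iff_strong_blocking_set (F : Type*) [Field F] [Fintype F] (n k : ℕ)
    (G : Matrix (Fin k) (Fin n) F)
    (hindep : LinearIndependent F G)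
    (hnondeg : ∀ j : Fin n, (fun i => G i j) ≠ 0) :
    (∀ c ∈ Submodule.span F (Set.range G), c ≠ 0 →
      ∀ c' ∈ Submodule.span F (Set.range G), {i | c' i ≠ 0} ⊆ {i | c i ≠ 0} →
        ∃ a : F, c' = a • c)
    ↔
    (∀ H : Submodule F (Fin k → F), Module.finrank F H = k - 1 →
      Submodule.span F {v : Fin k → F | (∃ j : Fin n, v = fun i => G i j) ∧ v ∈ H} = H) := by
  have hdim : Module.finrank F (Fin k → F) = k := by
    rw [Module.finrank_fintype_fun_eq_card, Fintype.card_fin]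
  constructor
  · -- minimal → strong blocking
    intro hmin H hH
    set S : Submodule F (Fin k → F) :=
      Submodule.span F {v : Fin k → F | (∃ j : Fin n, v = fun i => G i j) ∧ v ∈ H} with hSdef
    have hSle : S ≤ H := Submodule.span_le.mpr fun v hv => hv.2
    by_contra hne
    have hSlt : S < H := lt_of_le_of_ne hSle hne
    have hlt : Module.finrank F S < k - 1 := by
      rw [← hH]; exact Submodule.finrank_lt_finrank_of_lt hSlt
    -- finrank of dual annihilators
    have hannH : Module.finrank F H.dualAnnihilator = 1 := by
      have e : Module.finrank F ((Fin k → F) ⧸ H) = Module.finrank F H.dualAnnihilator :=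
        LinearEquiv.finrank_eq (Subspace.quotEquivAnnihilator H)
      have h2 := Submodule.finrank_quotient_add_finrank H
      rw [hdim] at h2
      omega
    have hannS : 2 ≤ Module.finrank F S.dualAnnihilator := by
      have e : Module.finrank F ((Fin k → F) ⧸ S) = Module.finrank F S.dualAnnihilator :=
        LinearEquiv.finrank_eq (Subspace.quotEquivAnnihilator S)
      have h2 := Submodule.finrank_quotient_add_finrank S
      rw [hdim] at h2
      omega
    -- pick φ with ker φ = H
    obtain ⟨φ, hφmem, hφ0⟩ := Submodule.exists_mem_ne_zero_of_ne_bot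
      (p := H.dualAnnihilator) (by
        intro hb
        rw [hb] at hannH
        simp at hannH)
    have hHle : H ≤ LinearMap.ker φ := fun v hv =>
      LinearMap.mem_ker.mpr ((Submodule.mem_dualAnnihilator φ).mp hφmem v hv)
    have hkerφ : Module.finrank F (LinearMap.ker φ) = k - 1 := by
      have h1 := LinearMap.finrank_range_add_finrank_ker φ
      rw [hdim] at h1
      have hr1 : Module.finrank F (LinearMap.range φ) = 1 := by
        have hle1 : Module.finrank F (LinearMap.range φ) ≤ 1 := by
          simpa using Submodule.finrank_le (LinearMap.range φ)
        have hpos : LinearMap.range φ ≠ ⊥ := by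
          simpa [LinearMap.range_eq_bot] using hφ0
        have : Module.finrank F (LinearMap.range φ) ≠ 0 := by
          intro h0
          exact hpos (Submodule.finrank_eq_zero.mp h0)
        omega
      have hk1 : 1 ≤ k := by omega
      omega
    have hHker : H = LinearMap.ker φ :=
      Submodule.eq_of_le_of_finrank_le hHle (by rw [hH, hkerφ])
    -- pick ψ annihilating S, not proportional to φ
    have hnotle : ¬ S.dualAnnihilator ≤ Submodule.span F {φ} := by
      intro hle
      have h1 : Module.finrank F (Submodule.span F {φ}) = 1 :=
        finrank_span_singleton hφ0
      have := Submodule.finrank_mono hle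
      omega
    obtain ⟨ψ, hψann, hψns⟩ := SetLike.not_le_iff_exists.mp hnotle
    -- build the codewords
    set c : Fin n → F := fun j => φ (fun i => G i j) with hcdef
    set c' : Fin n → F := fun j => ψ (fun i => G i j) with hc'def
    have hc : c ∈ Submodule.span F (Set.range G) :=
      (mem_span_range_iff_exists_fun F).mpr
        ⟨fun i => φ (fun j => if i = j then (1 : F) else 0), (cw_eq G φ).symm⟩
    have hc' : c' ∈ Submodule.span F (Set.range G) :=
      (mem_span_range_iff_exists_fun F).mpr
        ⟨fun i => ψ (fun j => if i = j then (1 : F) else 0), (cw_eq G ψ).symm⟩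
    have hc0 : c ≠ 0 := by
      intro h0
      apply hφ0
      have hz : ∀ i, φ (fun j => if i = j then (1 : F) else 0) = 0 := by
        have hsum : ∑ i, φ (fun j => if i = j then (1 : F) else 0) • G i = 0 := by
          rw [← cw_eq G φ, ← hcdef, h0]
        exact Fintype.linearIndependent_iff.mp hindep _ hsum
      refine LinearMap.ext fun v => ?_
      rw [LinearMap.pi_apply_eq_sum_univ φ v]
      simp [hz]
    have hsupp : {j | c' j ≠ 0} ⊆ {j | c j ≠ 0} := by
      intro j hj
      simp only [Set.mem_setOf_eq] at hj ⊢
      intro hcj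
      apply hj
      have hcol : (fun i => G i j) ∈ S := by
        apply Submodule.subset_span
        refine ⟨⟨j, rfl⟩, ?_⟩
        rw [hHker]
        exact LinearMap.mem_ker.mpr hcj
      exact (Submodule.mem_dualAnnihilator ψ).mp hψann _ hcol
    obtain ⟨a, ha⟩ := hmin c hc hc0 c' hc' hsupp
    -- derive ψ = a • φ, contradiction
    apply hψns
    have hsum : ∑ i, ψ (fun j => if i = j then (1 : F) else 0) • G i =
        ∑ i, (a * φ (fun j => if i = j then (1 : F) else 0)) • G i := by
      rw [← cw_eq G ψ, ← hc'def, ha]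
      funext j
      have hcj : c j = ∑ i, φ (fun j' => if i = j' then (1 : F) else 0) • G i j := by
        have := congrFun (cw_eq G φ) j
        simpa [Finset.sum_apply] using this
      have h1 : (a • c) j = a * c j := rfl
      rw [h1, hcj, Finset.mul_sum, Finset.sum_apply]
      refine Finset.sum_congr rfl fun i _ => ?_
      simp [mul_assoc]
    have hcoeff := coeff_unique hindep hsum
    have : ψ = a • φ := functional_eq_smul fun i => congrFun hcoeff i
    rw [this]
    exact Submodule.smul_mem _ a (Submodule.mem_span_singleton_self φ)
  · -- strong blocking → minimal
    intro hsb c hc hc0 c' hc' hsupp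
    obtain ⟨x, hx⟩ := (mem_span_range_iff_exists_fun F).mp hc
    obtain ⟨y, hy⟩ := (mem_span_range_iff_exists_fun F).mp hc'
    set φ : (Fin k → F) →ₗ[F] F := ∑ i, x i • LinearMap.proj i with hφdef
    set ψ : (Fin k → F) →ₗ[F] F := ∑ i, y i • LinearMap.proj i with hψdef
    have hcφ : c = fun j => φ (fun i => G i j) := by
      funext j
      rw [hφdef]
      simp only [LinearMap.sum_apply, LinearMap.smul_apply, LinearMap.proj_apply,
        smul_eq_mul]
      rw [← hx, Finset.sum_apply]
      simp
    have hc'ψ : c' = fun j => ψ (fun i => G i j) := by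
      funext j
      rw [hψdef]
      simp only [LinearMap.sum_apply, LinearMap.smul_apply, LinearMap.proj_apply,
        smul_eq_mul]
      rw [← hy, Finset.sum_apply]
      simp
    have hφ0 : φ ≠ 0 := by
      intro h0
      apply hc0
      rw [hcφ, h0]
      rfl
    -- the hyperplane ker φ
    have hkerφ : Module.finrank F (LinearMap.ker φ) = k - 1 := by
      have h1 := LinearMap.finrank_range_add_finrank_ker φ
      rw [hdim] at h1
      have hr1 : Module.finrank F (LinearMap.range φ) = 1 := by
        have hle1 : Module.finrank F (LinearMap.range φ) ≤ 1 := by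
          simpa using Submodule.finrank_le (LinearMap.range φ)
        have hpos : LinearMap.range φ ≠ ⊥ := by
          simpa [LinearMap.range_eq_bot] using hφ0
        have : Module.finrank F (LinearMap.range φ) ≠ 0 := by
          intro h0
          exact hpos (Submodule.finrank_eq_zero.mp h0)
        omega
      omega
    have hspan := hsb (LinearMap.ker φ) hkerφ
    -- ψ vanishes on ker φ
    have hker : LinearMap.ker φ ≤ LinearMap.ker ψ := by
      rw [← hspan]
      rw [Submodule.span_le]
      rintro v ⟨⟨j, rfl⟩, hvH⟩
      have hcj : c j = 0 := by
        rw [hcφ]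
        exact LinearMap.mem_ker.mp hvH
      have hc'j : c' j = 0 := by
        by_contra h
        exact (hsupp h) hcj
      rw [hc'ψ] at hc'j
      exact LinearMap.mem_ker.mpr hc'j
    -- ψ = a • φ
    obtain ⟨u, hu⟩ : ∃ u, φ u ≠ 0 := by
      by_contra h
      push_neg at h
      exact hφ0 (LinearMap.ext fun v => h v)
    refine ⟨ψ u * (φ u)⁻¹, ?_⟩
    funext j
    rw [hc'ψ, hcφ]
    set v : Fin k → F := fun i => G i j with hvdef
    have hmem : v - (φ v * (φ u)⁻¹) • u ∈ LinearMap.ker φ := by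
      rw [LinearMap.mem_ker, map_sub, map_smul, smul_eq_mul]
      field_simp
      simp
    have := hker hmem
    rw [LinearMap.mem_ker, map_sub, map_smul] at this
    have hψv : ψ v = φ v * (φ u)⁻¹ * ψ u := by
      have h2 := sub_eq_zero.mp this
      rw [smul_eq_mul] at h2
      rw [h2]
    show ψ v = (ψ u * (φ u)⁻¹) * φ v
    rw [hψv]
    ring
end

section
/- A hyperbolic quadric Q+(3,2) in PG(3,2) (the 9-point zero set of the quadratic form x_0 x_1 + x_2 x_3) is a strong blocking set: every plane of PG(3,2) intersects it in a set that spans the plane. -/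
/-- The underlying vector space `F_2^4` of `PG(3,2)`; since the only nonzero scalar of
`F_2` is `1`, points of `PG(3,2)` are identified with nonzero vectors of `V`. -/
abbrev V : Type := Fin 4 → ZMod 2

/-- Planes of `PG(3,2)` are the 3-dimensional subspaces of `F_2^4`. -/
def IsPlane (σ : Submodule (ZMod 2) V) : Prop := Module.finrank (ZMod 2) σ = 3

/-- Lines of `PG(3,2)` are the 2-dimensional subspaces of `F_2^4`. -/
def IsLine (l : Submodule (ZMod 2) V) : Prop := Module.finrank (ZMod 2) l = 2

/-- A strong blocking set in `PG(3,2)`: a set of (nonzero) points such that for every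
plane `σ`, the points of `S` lying in `σ` span `σ`. -/
def IsSBS (S : Set V) : Prop :=
  (∀ v ∈ S, v ≠ 0) ∧
  ∀ σ : Submodule (ZMod 2) V, IsPlane σ →
    Submodule.span (ZMod 2) (S ∩ (σ : Set V)) = σ

/-- The hyperbolic quadric `Q⁺(3,2)`: the 9 points of `PG(3,2)` satisfying
`x₀x₁ + x₂x₃ = 0`. -/
def Quad : Set V := {x : V | x ≠ 0 ∧ x 0 * x 1 + x 2 * x 3 = 0}

/-- The point set of a line `l`, i.e. its nonzero vectors. -/
def linePts (l : Submodule (ZMod 2) V) : Set V := (l : Set V) \ {0}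

set_option maxRecDepth 100000 in
set_option maxHeartbeats 1000000 in
set_option synthInstance.maxHeartbeats 400000 in
set_option synthInstance.maxSize 400 in
lemma key : ∀ c : V, c ≠ 0 → ∃ x y z : V,
    (x ≠ 0 ∧ x 0 * x 1 + x 2 * x 3 = 0 ∧ c 0 * x 0 + c 1 * x 1 + c 2 * x 2 + c 3 * x 3 = 0) ∧
    (y ≠ 0 ∧ y 0 * y 1 + y 2 * y 3 = 0 ∧ c 0 * y 0 + c 1 * y 1 + c 2 * y 2 + c 3 * y 3 = 0) ∧
    (z ≠ 0 ∧ z 0 * z 1 + z 2 * z 3 = 0 ∧ c 0 * z 0 + c 1 * z 1 + c 2 * z 2 + c 3 * z 3 = 0) ∧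
    x + y ≠ 0 ∧ x + z ≠ 0 ∧ y + z ≠ 0 ∧ x + y + z ≠ 0 := by decide

lemma indep {x y z : V} (hx : x ≠ 0) (hy : y ≠ 0) (hz : z ≠ 0)
    (hxy : x + y ≠ 0) (hxz : x + z ≠ 0) (hyz : y + z ≠ 0) (hxyz : x + y + z ≠ 0) :
    LinearIndependent (ZMod 2) ![x, y, z] := by
  rw [Fintype.linearIndependent_iff]
  intro g hg
  have hcases : ∀ a : ZMod 2, a = 0 ∨ a = 1 := by decide
  have hsum : g 0 • x + g 1 • y + g 2 • z = 0 := by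
    simpa [Fin.sum_univ_three] using hg
  rcases hcases (g 0) with h0 | h0 <;> rcases hcases (g 1) with h1 | h1 <;>
    rcases hcases (g 2) with h2 | h2 <;>
    simp only [h0, h1, h2, one_smul, zero_smul, zero_add, add_zero] at hsum
  · intro i; fin_cases i <;> assumption
  · exact absurd hsum hz
  · exact absurd hsum hy
  · exact absurd hsum hyz
  · exact absurd hsum hx
  · exact absurd hsum hxz
  · exact absurd hsum hxy
  · exact absurd hsum hxyz

/-- The hyperbolic quadric `Q⁺(3,2)` is a strong blocking set in `PG(3,2)`:
every plane intersects it in a set spanning the plane. -/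
theorem quadric_is_strong_blocking_set : IsSBS Quad := by
  constructor
  · intro v hv; exact hv.1
  intro σ hσ
  have h4 : Module.finrank (ZMod 2) V = 4 := by
    simp [Module.finrank_pi]
  have hq : Module.finrank (ZMod 2) (V ⧸ σ) = 1 := by
    have := Submodule.finrank_quotient_add_finrank σ
    rw [h4] at this; rw [IsPlane] at hσ; omega
  obtain ⟨e⟩ := FiniteDimensional.nonempty_linearEquiv_of_finrank_eq
    (hq.trans (Module.finrank_self (ZMod 2)).symm)
  set f : V →ₗ[ZMod 2] ZMod 2 := e.toLinearMap ∘ₗ σ.mkQ with hf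
  have hker : LinearMap.ker f = σ := by
    rw [hf, LinearMap.ker_comp, LinearEquiv.ker, Submodule.comap_bot, Submodule.ker_mkQ]
  set c : V := fun i => f (fun j => if i = j then 1 else 0) with hcdef
  have hfx : ∀ x : V, f x = c 0 * x 0 + c 1 * x 1 + c 2 * x 2 + c 3 * x 3 := by
    intro x
    rw [LinearMap.pi_apply_eq_sum_univ f x, Fin.sum_univ_four]
    simp only [hcdef, smul_eq_mul]
    ring
  have hmem : ∀ x : V, x ∈ σ ↔ c 0 * x 0 + c 1 * x 1 + c 2 * x 2 + c 3 * x 3 = 0 := by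
    intro x
    rw [← hker, LinearMap.mem_ker, hfx]
  have hc : c ≠ 0 := by
    intro h
    have htop : σ = ⊤ := by
      rw [Submodule.eq_top_iff']
      intro x
      rw [hmem]
      have h0 : ∀ i, c i = 0 := fun i => congrFun h i
      simp [h0]
    rw [IsPlane, htop] at hσ
    rw [finrank_top, h4] at hσ
    omega
  obtain ⟨x, y, z, ⟨hx0, hxq, hxd⟩, ⟨hy0, hyq, hyd⟩, ⟨hz0, hzq, hzd⟩, hxy, hxz, hyz, hxyz⟩ :=
    key c hc
  have hxσ : x ∈ σ := (hmem x).mpr hxd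
  have hyσ : y ∈ σ := (hmem y).mpr hyd
  have hzσ : z ∈ σ := (hmem z).mpr hzd
  have hsub : ({x, y, z} : Set V) ⊆ Quad ∩ (σ : Set V) := by
    intro w hw
    rcases hw with rfl | rfl | rfl
    · exact ⟨⟨hx0, hxq⟩, hxσ⟩
    · exact ⟨⟨hy0, hyq⟩, hyσ⟩
    · exact ⟨⟨hz0, hzq⟩, hzσ⟩
  have hspan3 : Module.finrank (ZMod 2) (Submodule.span (ZMod 2) ({x, y, z} : Set V)) = 3 := by
    have hi := indep hx0 hy0 hz0 hxy hxz hyz hxyz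
    have h := finrank_span_eq_card hi
    have hr : Set.range ![x, y, z] = ({x, y, z} : Set V) := by
      ext w
      constructor
      · rintro ⟨i, rfl⟩; fin_cases i <;> simp
      · rintro (rfl | rfl | rfl)
        exacts [⟨0, by simp⟩, ⟨1, by simp⟩, ⟨2, by simp⟩]
    rw [hr] at h
    simpa using h
  have hle1 : Submodule.span (ZMod 2) ({x, y, z} : Set V) ≤
      Submodule.span (ZMod 2) (Quad ∩ (σ : Set V)) := Submodule.span_mono hsub
  have hle2 : Submodule.span (ZMod 2) (Quad ∩ (σ : Set V)) ≤ σ := by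
    rw [Submodule.span_le]; exact Set.inter_subset_right
  have hr1 : 3 ≤ Module.finrank (ZMod 2) (Submodule.span (ZMod 2) (Quad ∩ (σ : Set V))) := by
    rw [← hspan3]
    exact Submodule.finrank_mono hle1
  have hr2 : Module.finrank (ZMod 2) (Submodule.span (ZMod 2) (Quad ∩ (σ : Set V))) ≤ 3 := by
    rw [IsPlane] at hσ
    rw [← hσ]
    exact Submodule.finrank_mono hle2
  exact Submodule.eq_of_le_of_finrank_eq hle2 (by rw [IsPlane] at hσ; omega)
end

section
/- Let S be a strong blocking set of size 9 in PG(3,2) and P a point of S. Then there are at most 2 lines through P entirely contained in S. -/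
/-! ### Encoding of `V` by `Fin 16` -/

def ι (n : Fin 16) : V := fun i => (((n : ℕ) >>> (i : ℕ)) % 2 : ℕ)

def dec (v : V) : Fin 16 :=
  ⟨(v 0).val + 2*(v 1).val + 4*(v 2).val + 8*(v 3).val, by
    have h0 := ZMod.val_lt (v 0); have h1 := ZMod.val_lt (v 1)
    have h2 := ZMod.val_lt (v 2); have h3 := ZMod.val_lt (v 3)
    omega⟩

lemma ι_dec : ∀ v : V, ι (dec v) = v := by decide
lemma dec_ι : ∀ n : Fin 16, dec (ι n) = n := by decide
lemma ι_zero : ι 0 = 0 := by decide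
lemma ι_add : ∀ m n : Fin 16, ι m + ι n = ι (m ^^^ n) := by decide

lemma ι_inj : Function.Injective ι := fun a b h => by
  rw [← dec_ι a, h, dec_ι]

/-! ### Linear functionals -/

def Fℓ (f : Fin 16) : V →ₗ[ZMod 2] ZMod 2 := ∑ i : Fin 4, ι f i • LinearMap.proj i

lemma Fℓ_apply (f : Fin 16) (x : V) : Fℓ f x = ∑ i : Fin 4, ι f i * x i := by
  simp [Fℓ, LinearMap.sum_apply, LinearMap.smul_apply, LinearMap.proj_apply, smul_eq_mul]

def dotZ (f n : Fin 16) : ZMod 2 := ∑ i : Fin 4, ι f i * ι n i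

lemma Fℓ_ι (f n : Fin 16) : Fℓ f (ι n) = dotZ f n := by rw [Fℓ_apply]; rfl

lemma dot_exists : ∀ f : Fin 16, f ≠ 0 → ∃ x : V, ¬ (∑ i : Fin 4, ι f i * x i = 0) := by decide

lemma finrankV : Module.finrank (ZMod 2) V = 4 := by
  simp [Module.finrank_pi]

lemma plane_ker' {f : Fin 16} (hf : f ≠ 0) :
    Module.finrank (ZMod 2) (LinearMap.ker (Fℓ f)) = 3 := by
  obtain ⟨x, hx⟩ := dot_exists f hf
  rw [← Fℓ_apply] at hx
  have hsurj : Function.Surjective (Fℓ f) := by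
    intro c
    have hz : ∀ z : ZMod 2, z ≠ 0 → z = 1 := by decide
    have hc : ∀ c : ZMod 2, c = 0 ∨ c = 1 := by decide
    rcases hc c with rfl | rfl
    · exact ⟨0, map_zero _⟩
    · exact ⟨x, hz _ hx⟩
  have hr : LinearMap.range (Fℓ f) = ⊤ := LinearMap.range_eq_top.mpr hsurj
  have h := LinearMap.finrank_range_add_finrank_ker (Fℓ f)
  rw [hr, finrankV] at h
  rw [finrank_top] at h
  simp [Module.finrank_self] at h
  omega

lemma plane_ker {f : Fin 16} (hf : f ≠ 0) : IsPlane (LinearMap.ker (Fℓ f)) := plane_ker' hf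

/-! ### The key consequence of the SBS property -/

lemma sbs_quad {S : Set V} (hS : IsSBS S) (f u v : Fin 16)
    (hf : f ≠ 0) (hu : u ≠ 0) (hv : v ≠ 0) (huv : u ≠ v) :
    ∃ x ∈ S, Fℓ f x = 0 ∧ x ≠ ι u ∧ x ≠ ι v ∧ x ≠ ι u + ι v := by
  by_contra hcon
  push_neg at hcon
  set L := Submodule.span (ZMod 2) ({ι u, ι v} : Set V) with hL
  have hsub : S ∩ (LinearMap.ker (Fℓ f) : Set V) ⊆ (L : Set V) := by
    rintro x ⟨hxS, hxk⟩
    have hk : Fℓ f x = 0 := hxk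
    by_cases h1 : x = ι u
    · exact h1 ▸ Submodule.subset_span (by simp)
    by_cases h2 : x = ι v
    · exact h2 ▸ Submodule.subset_span (by simp)
    have h3 := hcon x hxS hk h1 h2
    rw [h3]
    exact Submodule.add_mem _ (Submodule.subset_span (by simp)) (Submodule.subset_span (by simp))
  have hspan := hS.2 _ (plane_ker hf)
  have hle : LinearMap.ker (Fℓ f) ≤ L := by
    rw [← hspan]; exact Submodule.span_le.mpr hsub
  have hmono := Submodule.finrank_mono hle
  rw [plane_ker' hf] at hmono
  have hcard2 : Module.finrank (ZMod 2) L ≤ 2 := by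
    have h := finrank_span_le_card (R := ZMod 2) ({ι u, ι v} : Set V)
    refine h.trans ?_
    rw [Set.toFinset_insert, Set.toFinset_singleton]
    exact (Finset.card_insert_le _ _).trans (by simp)
  omega

/-! ### SBS is invariant under linear equivalences -/

lemma sbs_equiv (e : V ≃ₗ[ZMod 2] V) {S : Set V} (hS : IsSBS S) : IsSBS (⇑e '' S) := by
  constructor
  · rintro _ ⟨v, hv, rfl⟩ h0
    exact hS.1 v hv ((LinearEquiv.map_eq_zero_iff e).mp h0)
  · intro σ hσ
    have hτ : IsPlane (σ.map (e.symm : V →ₗ[ZMod 2] V)) := by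
      show Module.finrank (ZMod 2) _ = 3
      rw [LinearEquiv.finrank_map_eq e.symm σ]
      exact hσ
    have h := hS.2 _ hτ
    have h2 := congrArg (Submodule.map (e : V →ₗ[ZMod 2] V)) h
    have hmap : Submodule.map (e : V →ₗ[ZMod 2] V) (Submodule.map (e.symm : V →ₗ[ZMod 2] V) σ) = σ := by
      rw [← Submodule.map_comp]
      simp
    have hset : ⇑e '' (S ∩ ↑(Submodule.map (e.symm : V →ₗ[ZMod 2] V) σ)) = ⇑e '' S ∩ ↑σ := by
      rw [Set.image_inter e.injective]
      congr 1
      rw [Submodule.map_coe, ← Set.image_comp]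
      simp
    rw [Submodule.map_span] at h2
    simp only [LinearEquiv.coe_coe] at h2
    rw [hset, hmap] at h2
    exact h2


/-! ### Characteristic two helpers -/

lemma two_self (x : V) : x + x = 0 := by
  have h : (2 : ZMod 2) = 0 := rfl
  rw [← two_smul (ZMod 2) x, h, zero_smul]

lemma add_self_cancel_left (x y : V) : x + (x + y) = y := by
  rw [← add_assoc, two_self, zero_add]

/-! ### Structure of lines -/

lemma line_carrier {l : Submodule (ZMod 2) V} (hl : IsLine l) {P : V} (hPl : P ∈ l)
    (hP0 : P ≠ 0) :
    ∃ a, a ≠ 0 ∧ a ≠ P ∧ a ∈ l ∧ (l : Set V) = {0, P, a, P + a} := by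
  have hl2 : Module.finrank (ZMod 2) l = 2 := hl
  have hnle : ¬ l ≤ Submodule.span (ZMod 2) {P} := by
    intro hle
    have h := Submodule.finrank_mono hle
    rw [finrank_span_singleton hP0, hl2] at h
    omega
  obtain ⟨a, hal, hanot⟩ := SetLike.not_le_iff_exists.mp hnle
  have ha0 : a ≠ 0 := fun h => hanot (h ▸ Submodule.zero_mem _)
  have haP : a ≠ P := fun h => hanot (h ▸ Submodule.subset_span rfl)
  have hz : ∀ z : ZMod 2, z = 0 ∨ z = 1 := by decide
  have hind : LinearIndependent (ZMod 2) ![P, a] := by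
    rw [LinearIndependent.pair_iff]
    intro s t hst
    rcases hz s with rfl | rfl <;> rcases hz t with rfl | rfl
    · exact ⟨rfl, rfl⟩
    · simp only [zero_smul, one_smul, zero_add] at hst
      exact (ha0 hst).elim
    · simp only [zero_smul, one_smul, add_zero] at hst
      exact (hP0 hst).elim
    · exfalso
      simp only [one_smul] at hst
      apply haP
      have h3 := congrArg (fun z => P + z) hst
      simpa [add_self_cancel_left] using h3
  have hrange : Set.range ![P, a] = {P, a} := by
    simp only [Matrix.range_cons, Matrix.range_empty, Set.union_empty, Set.union_singleton]
    exact Set.pair_comm a P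
  have hspan : Submodule.span (ZMod 2) {P, a} = l := by
    apply Submodule.eq_of_le_of_finrank_le
    · rw [Submodule.span_le]
      rintro x (rfl | rfl)
      · exact hPl
      · exact hal
    · rw [hl2, ← hrange, finrank_span_eq_card hind]
      simp
  have hPP := two_self P
  have haa := two_self a
  have h1 : P + (P + a) = a := add_self_cancel_left P a
  have h2 : a + (P + a) = P := by rw [add_comm P a, add_self_cancel_left]
  have h3 : (P + a) + P = a := by rw [add_comm, h1]
  have h4 : (P + a) + a = P := by rw [add_comm, h2]
  have h5 : (P + a) + (P + a) = 0 := two_self _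
  have h6 : a + P = P + a := add_comm a P
  refine ⟨a, ha0, haP, hal, ?_⟩
  apply Set.Subset.antisymm
  · intro x hx
    rw [← hspan] at hx
    induction hx using Submodule.span_induction with
    | mem z hz' =>
      rcases hz' with rfl | rfl
      · simp
      · simp
    | zero => simp
    | add x y _ _ hx' hy' =>
      simp only [Set.mem_insert_iff, Set.mem_singleton_iff] at hx' hy' ⊢
      rcases hx' with rfl|rfl|rfl|rfl <;> rcases hy' with rfl|rfl|rfl|rfl <;>
        simp [hPP, haa, h1, h2, h3, h4, h5, h6]
    | smul c x _ hx' =>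
      rcases hz c with rfl | rfl
      · simp
      · simpa using hx'
  · intro x hx
    simp only [Set.mem_insert_iff, Set.mem_singleton_iff] at hx
    rcases hx with rfl|rfl|rfl|rfl
    · exact l.zero_mem
    · exact hPl
    · exact hal
    · exact l.add_mem hPl hal


/-! ### Pair independence -/

lemma pair_indep {x y : V} (hx : x ≠ 0) (hy : y ≠ 0) (hyx : y ≠ x) :
    LinearIndependent (ZMod 2) ![x, y] := by
  rw [LinearIndependent.pair_iff]
  intro s t hst
  have hz : ∀ z : ZMod 2, z = 0 ∨ z = 1 := by decide
  rcases hz s with rfl | rfl <;> rcases hz t with rfl | rfl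
  · exact ⟨rfl, rfl⟩
  · simp only [zero_smul, one_smul, zero_add] at hst
    exact (hy hst).elim
  · simp only [zero_smul, one_smul, add_zero] at hst
    exact (hx hst).elim
  · exfalso
    simp only [one_smul] at hst
    apply hyx
    have h3 := congrArg (fun z => x + z) hst
    simpa [add_self_cancel_left] using h3

lemma range_pair (x y : V) : Set.range ![x, y] = {x, y} := by
  ext w; simp [Matrix.range_cons, Matrix.range_empty]; tauto

lemma range_triple (x y z : V) : Set.range ![x, y, z] = {x, y, z} := by
  ext w; simp [Matrix.range_cons, Matrix.range_empty]; tauto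

/-! ### Basis construction -/

lemma main_construct {w c b a : V} (hind4 : LinearIndependent (ZMod 2) ![w, c, b, a]) :
    ∃ e : V ≃ₗ[ZMod 2] V, e w = ι 1 ∧ e c = ι 2 ∧ e b = ι 4 ∧ e a = ι 8 := by
  have hbcard : Fintype.card (Fin 4) = Module.finrank (ZMod 2) V := by
    rw [finrankV]; simp
  let bb := basisOfLinearIndependentOfCardEqFinrank hind4 hbcard
  have hb : ⇑bb = ![w, c, b, a] := coe_basisOfLinearIndependentOfCardEqFinrank _ _
  have key : ∀ i : Fin 4, bb.equivFun (bb i) = fun j => if i = j then 1 else 0 := by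
    intro i; funext j; rw [Module.Basis.equivFun_self]
  refine ⟨bb.equivFun, ?_, ?_, ?_, ?_⟩
  · rw [show w = bb 0 by rw [hb]; rfl, key 0]
    decide
  · rw [show c = bb 1 by rw [hb]; rfl, key 1]
    decide
  · rw [show b = bb 2 by rw [hb]; rfl, key 2]
    decide
  · rw [show a = bb 3 by rw [hb]; rfl, key 3]
    decide

/-! ### Witness tables for the two configurations -/

def witA (n : Fin 16) : Fin 16 × Fin 16 × Fin 16 :=
  match n.val with
  | 3 => (5,2,8)
  | 5 => (3,4,8)
  | 7 => (7,6,8)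
  | 9 => (3,4,8)
  | 11 => (5,2,8)
  | 13 => (3,4,8)
  | 15 => (7,6,8)
  | _ => (1,1,2)

def witB (a b : Fin 16) : Fin 16 × Fin 16 × Fin 16 :=
  match a.val, b.val with
  | 3, 7 => (9,2,4)
  | 3, 9 => (10,1,4)
  | 3, 10 => (9,2,4)
  | 3, 11 => (11,4,3)
  | 3, 13 => (10,1,4)
  | 3, 14 => (9,2,4)
  | 3, 15 => (11,4,3)
  | 7, 3 => (9,2,4)
  | 7, 9 => (10,1,4)
  | 7, 10 => (9,2,4)
  | 7, 11 => (11,4,7)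
  | 7, 13 => (10,1,4)
  | 7, 14 => (9,2,4)
  | 7, 15 => (11,4,7)
  | 9, 3 => (10,1,4)
  | 9, 7 => (10,1,4)
  | 9, 10 => (3,4,8)
  | 9, 11 => (11,4,9)
  | 9, 13 => (3,4,8)
  | 9, 14 => (3,4,8)
  | 9, 15 => (11,4,9)
  | 10, 3 => (9,2,4)
  | 10, 7 => (9,2,4)
  | 10, 9 => (3,4,8)
  | 10, 11 => (11,4,10)
  | 10, 13 => (3,4,8)
  | 10, 14 => (3,4,8)
  | 10, 15 => (11,4,10)
  | 11, 3 => (11,4,3)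
  | 11, 7 => (11,4,7)
  | 11, 9 => (11,4,9)
  | 11, 10 => (11,4,10)
  | 11, 13 => (11,4,13)
  | 11, 14 => (11,4,14)
  | 11, 15 => (11,4,1)
  | 13, 3 => (10,1,4)
  | 13, 7 => (10,1,4)
  | 13, 9 => (3,4,8)
  | 13, 10 => (3,4,8)
  | 13, 11 => (11,4,13)
  | 13, 14 => (3,4,8)
  | 13, 15 => (11,4,13)
  | 14, 3 => (9,2,4)
  | 14, 7 => (9,2,4)
  | 14, 9 => (3,4,8)
  | 14, 10 => (3,4,8)
  | 14, 11 => (11,4,14)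
  | 14, 13 => (3,4,8)
  | 14, 15 => (11,4,14)
  | 15, 3 => (11,4,3)
  | 15, 7 => (11,4,7)
  | 15, 9 => (11,4,9)
  | 15, 10 => (11,4,10)
  | 15, 11 => (11,4,1)
  | 15, 13 => (11,4,13)
  | 15, 14 => (11,4,14)
  | _, _ => (1,1,2)

lemma caseA_dec : ∀ n : Fin 16,
    ¬(n = 0 ∨ n = 1 ∨ n = 2 ∨ n = 4 ∨ n = 6 ∨ n = 8 ∨ n = 10 ∨ n = 12 ∨ n = 14) →
    (witA n).1 ≠ 0 ∧ (witA n).2.1 ≠ 0 ∧ (witA n).2.2 ≠ 0 ∧ (witA n).2.1 ≠ (witA n).2.2 ∧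
    ∀ m ∈ (n :: [1,2,4,6,8,10,12,14] : List (Fin 16)), dotZ (witA n).1 m = 0 →
      m = (witA n).2.1 ∨ m = (witA n).2.2 ∨ m = (witA n).2.1 ^^^ (witA n).2.2 := by decide

lemma caseB_dec : ∀ a b : Fin 16,
    (¬(a = 0 ∨ a = 1 ∨ a = 2 ∨ a = 4 ∨ a = 5 ∨ a = 6 ∨ a = 8 ∨ a = 12) ∧
     ¬(b = 0 ∨ b = 1 ∨ b = 2 ∨ b = 4 ∨ b = 5 ∨ b = 6 ∨ b = 8 ∨ b = 12) ∧
     b ≠ a) →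
    (witB a b).1 ≠ 0 ∧ (witB a b).2.1 ≠ 0 ∧ (witB a b).2.2 ≠ 0 ∧ (witB a b).2.1 ≠ (witB a b).2.2 ∧
    ∀ m ∈ (a :: b :: [1,2,4,5,6,8,12] : List (Fin 16)), dotZ (witB a b).1 m = 0 →
      m = (witB a b).2.1 ∨ m = (witB a b).2.2 ∨ m = (witB a b).2.1 ^^^ (witB a b).2.2 := by decide

/-! ### The final contradiction pattern -/

lemma final_contra {S' : Set V} (hS' : IsSBS S') (f u v : Fin 16) (hf : f ≠ 0) (hu : u ≠ 0)
    (hv : v ≠ 0) (huv : u ≠ v) (lst : List (Fin 16)) (hcover : ∀ z ∈ S', dec z ∈ lst)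
    (hprop : ∀ m ∈ lst, dotZ f m = 0 → m = u ∨ m = v ∨ m = u ^^^ v) : False := by
  obtain ⟨z, hzS, hzk, h1, h2, h3⟩ := sbs_quad hS' f u v hf hu hv huv
  have hm := hprop (dec z) (hcover z hzS) (by rw [← Fℓ_ι, ι_dec]; exact hzk)
  rcases hm with h | h | h
  · exact h1 (by rw [← ι_dec z, h])
  · exact h2 (by rw [← ι_dec z, h])
  · exact h3 (by rw [← ι_dec z, h, ← ι_add])


/-- Through a point `P` of a strong blocking set `S` of size 9 in `PG(3,2)` there pass
at most 2 lines entirely contained in `S`. -/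
theorem at_most_two_lines_through_point (S : Set V) (hS : IsSBS S) (hcard : S.ncard = 9)
    (P : V) (hP : P ∈ S) :
    {l : Submodule (ZMod 2) V | IsLine l ∧ P ∈ l ∧ linePts l ⊆ S}.ncard ≤ 2 := by
  classical
  by_contra hcon
  push_neg at hcon
  obtain ⟨T, hTsub, hT3⟩ := Set.exists_subset_card_eq hcon
  obtain ⟨l1, l2, l3, h12, h13, h23, hTeq⟩ := Set.ncard_eq_three.mp hT3
  have hm1 : IsLine l1 ∧ P ∈ l1 ∧ linePts l1 ⊆ S := hTsub (by rw [hTeq]; simp)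
  have hm2 : IsLine l2 ∧ P ∈ l2 ∧ linePts l2 ⊆ S := hTsub (by rw [hTeq]; simp)
  have hm3 : IsLine l3 ∧ P ∈ l3 ∧ linePts l3 ⊆ S := hTsub (by rw [hTeq]; simp)
  have hP0 : P ≠ 0 := hS.1 P hP
  obtain ⟨a1, ha10, ha1P, ha1l, hc1⟩ := line_carrier hm1.1 hm1.2.1 hP0
  obtain ⟨a2, ha20, ha2P, ha2l, hc2⟩ := line_carrier hm2.1 hm2.2.1 hP0
  obtain ⟨a3, ha30, ha3P, ha3l, hc3⟩ := line_carrier hm3.1 hm3.2.1 hP0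
  have hzz : ∀ z : ZMod 2, z = 0 ∨ z = 1 := by decide
  have hsum0 : ∀ {a : V}, a ≠ P → P + a ≠ 0 := by
    intro a haP' h
    apply haP'
    have h3 := congrArg (fun z => P + z) h
    simpa [add_self_cancel_left] using h3
  have ha1S : a1 ∈ S := hm1.2.2 ⟨ha1l, by simp [ha10]⟩
  have hb1S : P + a1 ∈ S := hm1.2.2 ⟨l1.add_mem hm1.2.1 ha1l, by simp [hsum0 ha1P]⟩
  have ha2S : a2 ∈ S := hm2.2.2 ⟨ha2l, by simp [ha20]⟩
  have hb2S : P + a2 ∈ S := hm2.2.2 ⟨l2.add_mem hm2.2.1 ha2l, by simp [hsum0 ha2P]⟩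
  have ha3S : a3 ∈ S := hm3.2.2 ⟨ha3l, by simp [ha30]⟩
  have hb3S : P + a3 ∈ S := hm3.2.2 ⟨l3.add_mem hm3.2.1 ha3l, by simp [hsum0 ha3P]⟩
  have hdist : ∀ {l l' : Submodule (ZMod 2) V} {a a' : V}, (l : Set V) = {0, P, a, P + a} →
      (l' : Set V) = {0, P, a', P + a'} → l ≠ l' → a' ≠ a ∧ a' ≠ P + a := by
    intro l l' a a' hcl hcl' hne
    constructor
    · rintro rfl
      exact hne (SetLike.coe_injective (hcl.trans hcl'.symm))
    · rintro rfl
      apply hne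
      apply SetLike.coe_injective
      rw [hcl, hcl', add_self_cancel_left]
      ext w
      simp only [Set.mem_insert_iff, Set.mem_singleton_iff]
      tauto
  have hd21 := hdist hc1 hc2 h12
  have hd31 := hdist hc1 hc3 h13
  have hd32 := hdist hc2 hc3 h23
  have ha2nl1 : a2 ∉ l1 := by
    intro h
    have h' : a2 ∈ ({0, P, a1, P + a1} : Set V) := hc1 ▸ h
    simp only [Set.mem_insert_iff, Set.mem_singleton_iff] at h'
    rcases h' with h' | h' | h' | h'
    exacts [ha20 h', ha2P h', hd21.1 h', hd21.2 h']
  have hind2 : LinearIndependent (ZMod 2) ![P, a1] := pair_indep hP0 ha10 ha1P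
  have hspan12 : Submodule.span (ZMod 2) ({P, a1} : Set V) ≤ l1 := by
    rw [Submodule.span_le]
    rintro w (rfl | rfl)
    exacts [hm1.2.1, ha1l]
  have hind3 : LinearIndependent (ZMod 2) ![a2, P, a1] := by
    rw [show (![a2, P, a1]) = Fin.cons a2 ![P, a1] from rfl, linearIndependent_fin_cons]
    refine ⟨hind2, fun h => ha2nl1 (hspan12 ?_)⟩
    rwa [range_pair] at h
  set σ3 := Submodule.span (ZMod 2) ({a2, P, a1} : Set V) with hσ3def
  have hσ3rank : Module.finrank (ZMod 2) σ3 = 3 := by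
    rw [hσ3def, show ({a2, P, a1} : Set V) = Set.range ![a2, P, a1] from (range_triple _ _ _).symm,
      finrank_span_eq_card hind3]
    simp
  by_cases hcc : a3 ∈ σ3
  · -- CASE A : the three lines are coplanar
    have hxex : ∃ x ∈ S, x ∉ σ3 := by
      by_contra hall
      push_neg at hall
      have hdot1 : dotZ 1 2 = 0 := by decide
      have hdot2 : dotZ 2 2 ≠ 0 := by decide
      have hne : σ3 ≠ LinearMap.ker (Fℓ 1) ∨ σ3 ≠ LinearMap.ker (Fℓ 2) := by
        by_contra h
        push_neg at h
        have h12' : LinearMap.ker (Fℓ 1) = LinearMap.ker (Fℓ (2 : Fin 16)) := by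
          rw [← h.1, h.2]
        have hmem : ι 2 ∈ LinearMap.ker (Fℓ 1) := by
          rw [LinearMap.mem_ker, Fℓ_ι]
          exact hdot1
        rw [h12'] at hmem
        rw [LinearMap.mem_ker, Fℓ_ι] at hmem
        exact hdot2 hmem
      obtain ⟨f0, hf0, hneq⟩ : ∃ f0 : Fin 16, f0 ≠ 0 ∧ σ3 ≠ LinearMap.ker (Fℓ f0) := by
        rcases hne with h | h
        · exact ⟨1, by decide, h⟩
        · exact ⟨2, by decide, h⟩
      have hsp := hS.2 _ (plane_ker hf0)
      have hle2 : LinearMap.ker (Fℓ f0) ≤ σ3 := by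
        conv_lhs => rw [← hsp]
        exact Submodule.span_le.mpr fun x hx => hall x hx.1
      have heq : LinearMap.ker (Fℓ f0) = σ3 :=
        Submodule.eq_of_le_of_finrank_le hle2 (by rw [hσ3rank, plane_ker' hf0])
      exact hneq heq.symm
    obtain ⟨x, hxS, hxn⟩ := hxex
    have hind4 : LinearIndependent (ZMod 2) ![x, a2, P, a1] := by
      rw [show (![x, a2, P, a1]) = Fin.cons x ![a2, P, a1] from rfl, linearIndependent_fin_cons]
      refine ⟨hind3, fun h => hxn ?_⟩
      rwa [range_triple] at h
    obtain ⟨e, hew, hea2, heP, hea1⟩ := main_construct hind4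
    have ha3' : a3 = a1 + a2 ∨ a3 = a2 + (P + a1) := by
      rw [hσ3def, show ({a2, P, a1} : Set V) = insert a2 {P, a1} from rfl,
        Submodule.mem_span_insert] at hcc
      obtain ⟨cc, z, hz, hEq⟩ := hcc
      have hzl1 : z ∈ ({0, P, a1, P + a1} : Set V) := hc1 ▸ hspan12 hz
      simp only [Set.mem_insert_iff, Set.mem_singleton_iff] at hzl1
      rcases hzz cc with rfl | rfl
      · rw [zero_smul, zero_add] at hEq
        exfalso
        rcases hzl1 with h' | h' | h' | h' <;> rw [h'] at hEq
        exacts [ha30 hEq, ha3P hEq, hd31.1 hEq, hd31.2 hEq]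
      · rw [one_smul] at hEq
        rcases hzl1 with h' | h' | h' | h' <;> rw [h'] at hEq
        · exfalso
          rw [add_zero] at hEq
          exact hd32.1 hEq
        · exfalso
          rw [add_comm a2 P] at hEq
          exact hd32.2 hEq
        · left
          rw [hEq, add_comm]
        · right
          exact hEq
    have heb1 : e (P + a1) = ι 12 := by rw [map_add, heP, hea1]; decide
    have heb2 : e (P + a2) = ι 6 := by rw [map_add, heP, hea2]; decide
    set S' := ⇑e '' S with hS'def
    have hS'sbs : IsSBS S' := sbs_equiv e hS
    have hcard' : S'.ncard = 9 := by
      rw [hS'def, Set.ncard_image_of_injective _ e.injective]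
      exact hcard
    have h10S : ι 10 ∈ S' ∧ ι 14 ∈ S' := by
      rcases ha3' with h | h
      · have hh1 : e a3 = ι 10 := by rw [h, map_add, hea1, hea2]; decide
        have hh2 : e (P + a3) = ι 14 := by rw [map_add, heP, h, map_add, hea1, hea2]; decide
        exact ⟨hh1 ▸ Set.mem_image_of_mem _ ha3S, hh2 ▸ Set.mem_image_of_mem _ hb3S⟩
      · have hh1 : e a3 = ι 14 := by
          rw [h, map_add, hea2, map_add, heP, hea1]; decide
        have hh2 : e (P + a3) = ι 10 := by
          rw [map_add, heP, h, map_add, hea2, map_add, heP, hea1]; decide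
        exact ⟨hh2 ▸ Set.mem_image_of_mem _ hb3S, hh1 ▸ Set.mem_image_of_mem _ ha3S⟩
    set K : Set V := {ι 1, ι 2, ι 4, ι 6, ι 8, ι 10, ι 12, ι 14} with hKdef
    have hKsub : K ⊆ S' := by
      intro z hz
      simp only [hKdef, Set.mem_insert_iff, Set.mem_singleton_iff] at hz
      rcases hz with rfl | rfl | rfl | rfl | rfl | rfl | rfl | rfl
      · exact hew ▸ Set.mem_image_of_mem _ hxS
      · exact hea2 ▸ Set.mem_image_of_mem _ ha2S
      · exact heP ▸ Set.mem_image_of_mem _ hP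
      · exact heb2 ▸ Set.mem_image_of_mem _ hb2S
      · exact hea1 ▸ Set.mem_image_of_mem _ ha1S
      · exact h10S.1
      · exact heb1 ▸ Set.mem_image_of_mem _ hb1S
      · exact h10S.2
    have hKcard : K.ncard = 8 := by
      rw [hKdef,
        Set.ncard_insert_of_notMem (by simp [ι_inj.eq_iff]) (Set.toFinite _),
        Set.ncard_insert_of_notMem (by simp [ι_inj.eq_iff]) (Set.toFinite _),
        Set.ncard_insert_of_notMem (by simp [ι_inj.eq_iff]) (Set.toFinite _),
        Set.ncard_insert_of_notMem (by simp [ι_inj.eq_iff]) (Set.toFinite _),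
        Set.ncard_insert_of_notMem (by simp [ι_inj.eq_iff]) (Set.toFinite _),
        Set.ncard_insert_of_notMem (by simp [ι_inj.eq_iff]) (Set.toFinite _),
        Set.ncard_insert_of_notMem (by simp [ι_inj.eq_iff]) (Set.toFinite _),
        Set.ncard_singleton]
    obtain ⟨y, hyS', hyK⟩ : ∃ y ∈ S', y ∉ K := by
      by_contra hall
      push_neg at hall
      have hle := Set.ncard_le_ncard (fun z hz => hall z hz) (K.toFinite)
      rw [hcard', hKcard] at hle
      omega
    have hSeq : insert y K = S' := by
      apply Set.eq_of_subset_of_ncard_le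
      · intro z hz
        rcases Set.mem_insert_iff.mp hz with rfl | hz'
        exacts [hyS', hKsub hz']
      · rw [hcard', Set.ncard_insert_of_notMem hyK (K.toFinite), hKcard]
      · exact Set.toFinite _
    have hguard : ¬(dec y = 0 ∨ dec y = 1 ∨ dec y = 2 ∨ dec y = 4 ∨ dec y = 6 ∨ dec y = 8 ∨
        dec y = 10 ∨ dec y = 12 ∨ dec y = 14) := by
      rintro (h | h | h | h | h | h | h | h | h)
      · exact hS'sbs.1 y hyS' (by rw [← ι_dec y, h, ι_zero])
      all_goals exact hyK (by rw [← ι_dec y, h]; simp [hKdef])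
    obtain ⟨hf, hu, hv, huv, hprop⟩ := caseA_dec (dec y) hguard
    refine final_contra hS'sbs _ _ _ hf hu hv huv _ ?_ hprop
    intro z hzS'
    rw [← hSeq] at hzS'
    rcases Set.mem_insert_iff.mp hzS' with rfl | hzK
    · exact List.mem_cons_self
    · simp only [hKdef, Set.mem_insert_iff, Set.mem_singleton_iff] at hzK
      rcases hzK with rfl | rfl | rfl | rfl | rfl | rfl | rfl | rfl <;>
        (rw [dec_ι]; exact List.mem_cons_of_mem _ (by decide))
  · -- CASE B : the three lines span the space
    have hind4 : LinearIndependent (ZMod 2) ![a3, a2, P, a1] := by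
      rw [show (![a3, a2, P, a1]) = Fin.cons a3 ![a2, P, a1] from rfl, linearIndependent_fin_cons]
      refine ⟨hind3, fun h => hcc ?_⟩
      rwa [range_triple] at h
    obtain ⟨e, hew, hea2, heP, hea1⟩ := main_construct hind4
    have heb1 : e (P + a1) = ι 12 := by rw [map_add, heP, hea1]; decide
    have heb2 : e (P + a2) = ι 6 := by rw [map_add, heP, hea2]; decide
    have heb3 : e (P + a3) = ι 5 := by rw [map_add, heP, hew]; decide
    set S' := ⇑e '' S with hS'def
    have hS'sbs : IsSBS S' := sbs_equiv e hS
    have hcard' : S'.ncard = 9 := by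
      rw [hS'def, Set.ncard_image_of_injective _ e.injective]
      exact hcard
    set K : Set V := {ι 1, ι 2, ι 4, ι 5, ι 6, ι 8, ι 12} with hKdef
    have hKsub : K ⊆ S' := by
      intro z hz
      simp only [hKdef, Set.mem_insert_iff, Set.mem_singleton_iff] at hz
      rcases hz with rfl | rfl | rfl | rfl | rfl | rfl | rfl
      · exact hew ▸ Set.mem_image_of_mem _ ha3S
      · exact hea2 ▸ Set.mem_image_of_mem _ ha2S
      · exact heP ▸ Set.mem_image_of_mem _ hP
      · exact heb3 ▸ Set.mem_image_of_mem _ hb3S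
      · exact heb2 ▸ Set.mem_image_of_mem _ hb2S
      · exact hea1 ▸ Set.mem_image_of_mem _ ha1S
      · exact heb1 ▸ Set.mem_image_of_mem _ hb1S
    have hKcard : K.ncard = 7 := by
      rw [hKdef,
        Set.ncard_insert_of_notMem (by simp [ι_inj.eq_iff]) (Set.toFinite _),
        Set.ncard_insert_of_notMem (by simp [ι_inj.eq_iff]) (Set.toFinite _),
        Set.ncard_insert_of_notMem (by simp [ι_inj.eq_iff]) (Set.toFinite _),
        Set.ncard_insert_of_notMem (by simp [ι_inj.eq_iff]) (Set.toFinite _),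
        Set.ncard_insert_of_notMem (by simp [ι_inj.eq_iff]) (Set.toFinite _),
        Set.ncard_insert_of_notMem (by simp [ι_inj.eq_iff]) (Set.toFinite _),
        Set.ncard_singleton]
    obtain ⟨x, hxS', hxK⟩ : ∃ x ∈ S', x ∉ K := by
      by_contra hall
      push_neg at hall
      have hle := Set.ncard_le_ncard (fun z hz => hall z hz) (K.toFinite)
      rw [hcard', hKcard] at hle
      omega
    obtain ⟨y, hyS', hyK⟩ : ∃ y ∈ S', y ∉ insert x K := by
      by_contra hall
      push_neg at hall
      have hle := Set.ncard_le_ncard (fun z hz => hall z hz) (Set.toFinite _)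
      rw [hcard', Set.ncard_insert_of_notMem hxK (K.toFinite), hKcard] at hle
      omega
    have hSeq : insert y (insert x K) = S' := by
      apply Set.eq_of_subset_of_ncard_le
      · intro z hz
        rcases Set.mem_insert_iff.mp hz with rfl | hz'
        · exact hyS'
        rcases Set.mem_insert_iff.mp hz' with rfl | hz''
        exacts [hxS', hKsub hz'']
      · rw [hcard', Set.ncard_insert_of_notMem hyK (Set.toFinite _),
          Set.ncard_insert_of_notMem hxK (K.toFinite), hKcard]
      · exact Set.toFinite _
    have hyx : y ≠ x := fun h => hyK (h ▸ Set.mem_insert x K)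
    have hguardx : ¬(dec x = 0 ∨ dec x = 1 ∨ dec x = 2 ∨ dec x = 4 ∨ dec x = 5 ∨ dec x = 6 ∨
        dec x = 8 ∨ dec x = 12) := by
      rintro (h | h | h | h | h | h | h | h)
      · exact hS'sbs.1 x hxS' (by rw [← ι_dec x, h, ι_zero])
      all_goals exact hxK (by rw [← ι_dec x, h]; simp [hKdef])
    have hguardy : ¬(dec y = 0 ∨ dec y = 1 ∨ dec y = 2 ∨ dec y = 4 ∨ dec y = 5 ∨ dec y = 6 ∨
        dec y = 8 ∨ dec y = 12) := by
      rintro (h | h | h | h | h | h | h | h)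
      · exact hS'sbs.1 y hyS' (by rw [← ι_dec y, h, ι_zero])
      all_goals exact hyK (Set.mem_insert_of_mem _ (by rw [← ι_dec y, h]; simp [hKdef]))
    have hyxdec : dec y ≠ dec x := fun h => hyx (by rw [← ι_dec y, h, ι_dec])
    obtain ⟨hf, hu, hv, huv, hprop⟩ := caseB_dec (dec x) (dec y) ⟨hguardx, hguardy, hyxdec⟩
    refine final_contra hS'sbs _ _ _ hf hu hv huv _ ?_ hprop
    intro z hzS'
    rw [← hSeq] at hzS'
    rcases Set.mem_insert_iff.mp hzS' with rfl | hz'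
    · exact List.mem_cons_of_mem _ (List.mem_cons_self)
    rcases Set.mem_insert_iff.mp hz' with rfl | hzK
    · exact List.mem_cons_self
    · simp only [hKdef, Set.mem_insert_iff, Set.mem_singleton_iff] at hzK
      rcases hzK with rfl | rfl | rfl | rfl | rfl | rfl | rfl <;>
        (rw [dec_ι]; exact List.mem_cons_of_mem _ (List.mem_cons_of_mem _ (by decide)))
end

section
/- The parabolic quadric Q(4,2), the zero set in PG(4,2) of x_0^2 + x_1 x_2 + x_3 x_4, has exactly 15 points and is a strong blocking set in PG(4,2). -/
def W : (Fin 5 → ZMod 2) → Fin 4 → Fin 5 → ZMod 2 := fun a =>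
  if a = ![0,0,0,0,1] then ![![0,0,0,1,0],![0,0,1,0,0],![0,1,0,0,0],![1,1,1,0,0]] else
  if a = ![0,0,0,1,0] then ![![0,0,0,0,1],![0,0,1,0,0],![0,1,0,0,0],![1,1,1,0,0]] else
  if a = ![0,0,0,1,1] then ![![0,0,1,0,0],![0,1,0,0,0],![0,1,1,1,1],![1,0,0,1,1]] else
  if a = ![0,0,1,0,0] then ![![0,0,0,0,1],![0,0,0,1,0],![0,1,0,0,0],![1,0,0,1,1]] else
  if a = ![0,0,1,0,1] then ![![0,0,0,1,0],![0,0,1,0,1],![0,1,0,0,0],![1,0,1,1,1]] else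
  if a = ![0,0,1,1,0] then ![![0,0,0,0,1],![0,0,1,1,0],![0,1,0,0,0],![1,0,1,1,1]] else
  if a = ![0,0,1,1,1] then ![![0,0,1,0,1],![0,0,1,1,0],![0,1,0,0,0],![1,0,0,1,1]] else
  if a = ![0,1,0,0,0] then ![![0,0,0,0,1],![0,0,0,1,0],![0,0,1,0,0],![1,0,0,1,1]] else
  if a = ![0,1,0,0,1] then ![![0,0,0,1,0],![0,0,1,0,0],![0,1,0,0,1],![1,1,0,1,1]] else
  if a = ![0,1,0,1,0] then ![![0,0,0,0,1],![0,0,1,0,0],![0,1,0,1,0],![1,1,0,1,1]] else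
  if a = ![0,1,0,1,1] then ![![0,0,1,0,0],![0,1,0,0,1],![0,1,0,1,0],![1,0,0,1,1]] else
  if a = ![0,1,1,0,0] then ![![0,0,0,0,1],![0,0,0,1,0],![0,1,1,1,1],![1,0,0,1,1]] else
  if a = ![0,1,1,0,1] then ![![0,0,0,1,0],![0,0,1,0,1],![0,1,0,0,1],![1,0,1,1,1]] else
  if a = ![0,1,1,1,0] then ![![0,0,0,0,1],![0,0,1,1,0],![0,1,0,1,0],![1,0,1,1,1]] else
  if a = ![0,1,1,1,1] then ![![0,0,1,0,1],![0,0,1,1,0],![0,1,0,0,1],![1,0,0,1,1]] else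
  if a = ![1,0,0,0,0] then ![![0,0,0,0,1],![0,0,0,1,0],![0,0,1,0,0],![0,1,0,0,0]] else
  if a = ![1,0,0,0,1] then ![![0,0,0,1,0],![0,0,1,0,0],![0,1,0,0,0],![1,0,0,1,1]] else
  if a = ![1,0,0,1,0] then ![![0,0,0,0,1],![0,0,1,0,0],![0,1,0,0,0],![1,0,0,1,1]] else
  if a = ![1,0,0,1,1] then ![![0,0,1,0,0],![0,1,0,0,0],![0,1,1,1,1],![1,1,1,0,1]] else
  if a = ![1,0,1,0,0] then ![![0,0,0,0,1],![0,0,0,1,0],![0,1,0,0,0],![1,0,1,1,1]] else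
  if a = ![1,0,1,0,1] then ![![0,0,0,1,0],![0,0,1,0,1],![0,1,0,0,0],![1,0,0,1,1]] else
  if a = ![1,0,1,1,0] then ![![0,0,0,0,1],![0,0,1,1,0],![0,1,0,0,0],![1,0,0,1,1]] else
  if a = ![1,0,1,1,1] then ![![0,0,1,0,1],![0,0,1,1,0],![0,1,0,0,0],![1,0,1,1,1]] else
  if a = ![1,1,0,0,0] then ![![0,0,0,0,1],![0,0,0,1,0],![0,0,1,0,0],![1,1,0,1,1]] else
  if a = ![1,1,0,0,1] then ![![0,0,0,1,0],![0,0,1,0,0],![0,1,0,0,1],![1,0,0,1,1]] else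
  if a = ![1,1,0,1,0] then ![![0,0,0,0,1],![0,0,1,0,0],![0,1,0,1,0],![1,0,0,1,1]] else
  if a = ![1,1,0,1,1] then ![![0,0,1,0,0],![0,1,0,0,1],![0,1,0,1,0],![1,1,0,1,1]] else
  if a = ![1,1,1,0,0] then ![![0,0,0,0,1],![0,0,0,1,0],![0,1,1,1,1],![1,0,1,1,1]] else
  if a = ![1,1,1,0,1] then ![![0,0,0,1,0],![0,0,1,0,1],![0,1,0,0,1],![1,0,0,1,1]] else
  if a = ![1,1,1,1,0] then ![![0,0,0,0,1],![0,0,1,1,0],![0,1,0,1,0],![1,0,0,1,1]] else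
  if a = ![1,1,1,1,1] then ![![0,0,1,0,1],![0,0,1,1,0],![0,1,0,0,1],![1,0,1,1,1]] else
  0

def quadS : Set (Fin 5 → ZMod 2) :=
  {x : Fin 5 → ZMod 2 | x ≠ 0 ∧ x 0 * x 0 + x 1 * x 2 + x 3 * x 4 = 0}

lemma key_s18 : ∀ a : Fin 5 → ZMod 2, a ≠ 0 →
    (∀ i : Fin 4, W a i ≠ 0 ∧
      (W a i 0 * W a i 0 + W a i 1 * W a i 2 + W a i 3 * W a i 4 = 0) ∧
      ∑ j : Fin 5, a j * W a i j = 0) ∧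
    (∀ g : Fin 4 → ZMod 2, ∑ i : Fin 4, g i • W a i = 0 → ∀ i, g i = 0) := by decide

lemma card_quadS : quadS.ncard = 15 := by
  unfold quadS
  rw [Set.ncard_eq_toFinset_card']
  decide

lemma span_quadS (σ : Submodule (ZMod 2) (Fin 5 → ZMod 2))
    (hσ : Module.finrank (ZMod 2) σ = 4) :
    Submodule.span (ZMod 2) (quadS ∩ (σ : Set (Fin 5 → ZMod 2))) = σ := by
  -- build a linear functional whose kernel is σ
  have hq : Module.finrank (ZMod 2) ((Fin 5 → ZMod 2) ⧸ σ) = 1 := by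
    have := Submodule.finrank_quotient_add_finrank σ
    have h5 : Module.finrank (ZMod 2) (Fin 5 → ZMod 2) = 5 := by
      simp [Module.finrank_pi]
    omega
  have hone : Module.finrank (ZMod 2) (ZMod 2) = 1 := Module.finrank_self _
  let e : ((Fin 5 → ZMod 2) ⧸ σ) ≃ₗ[ZMod 2] ZMod 2 :=
    LinearEquiv.ofFinrankEq _ _ (by rw [hq, hone])
  let f : (Fin 5 → ZMod 2) →ₗ[ZMod 2] ZMod 2 := e.toLinearMap ∘ₗ σ.mkQ
  have hker : LinearMap.ker f = σ := by
    ext x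
    simp [f, LinearMap.mem_ker, LinearMap.comp_apply,
      (EmbeddingLike.map_eq_zero_iff (f := e)), Submodule.Quotient.mk_eq_zero]
  set a : Fin 5 → ZMod 2 := fun i => f (Pi.single i 1) with ha
  have hfx : ∀ x : Fin 5 → ZMod 2, f x = ∑ j : Fin 5, a j * x j := by
    intro x
    have hx : x = ∑ j : Fin 5, x j • Pi.single j (1 : ZMod 2) := by
      ext k; simp [Finset.sum_apply, Pi.single_apply]
    conv_lhs => rw [hx]
    rw [map_sum]
    simp [ha, mul_comm]
  have hmem : ∀ x, x ∈ σ ↔ ∑ j : Fin 5, a j * x j = 0 := by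
    intro x
    rw [← hker, LinearMap.mem_ker, hfx]
  have hane : a ≠ 0 := by
    intro h0
    have : σ = ⊤ := by
      ext x; simp [hmem x, h0]
    rw [this] at hσ
    have h5 : Module.finrank (ZMod 2) (Fin 5 → ZMod 2) = 5 := by
      simp [Module.finrank_pi]
    rw [finrank_top, h5] at hσ
    omega
  obtain ⟨hW, hind⟩ := key_s18 a hane
  have hindep : LinearIndependent (ZMod 2) (W a) := by
    rw [Fintype.linearIndependent_iff]
    exact hind
  have hsub : ∀ i : Fin 4, W a i ∈ quadS ∩ (σ : Set (Fin 5 → ZMod 2)) := by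
    intro i
    obtain ⟨h1, h2, h3⟩ := hW i
    exact ⟨⟨h1, h2⟩, (hmem _).2 h3⟩
  have hle : Submodule.span (ZMod 2) (quadS ∩ (σ : Set (Fin 5 → ZMod 2))) ≤ σ :=
    Submodule.span_le.2 fun x hx => hx.2
  have hle2 : Submodule.span (ZMod 2) (Set.range (W a)) ≤
      Submodule.span (ZMod 2) (quadS ∩ (σ : Set (Fin 5 → ZMod 2))) := by
    apply Submodule.span_mono
    rintro x ⟨i, rfl⟩
    exact hsub i
  have hr1 : Module.finrank (ZMod 2)
      (Submodule.span (ZMod 2) (Set.range (W a))) = 4 := by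
    rw [finrank_span_eq_card hindep]
    simp
  have hr2 : 4 ≤ Module.finrank (ZMod 2)
      (Submodule.span (ZMod 2) (quadS ∩ (σ : Set (Fin 5 → ZMod 2)))) := by
    rw [← hr1]
    exact Submodule.finrank_mono hle2
  exact Submodule.eq_of_le_of_finrank_le hle (by rw [hσ]; exact hr2)

/-- The parabolic quadric `Q(4,2)`, the zero set in `PG(4,2)` of
`x₀² + x₁x₂ + x₃x₄`, has exactly 15 points and is a strong blocking set in `PG(4,2)`. -/
theorem parabolic_quadric_sbs :
    {x : Fin 5 → ZMod 2 | x ≠ 0 ∧ x 0 * x 0 + x 1 * x 2 + x 3 * x 4 = 0}.ncard = 15 ∧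
    ∀ σ : Submodule (ZMod 2) (Fin 5 → ZMod 2), Module.finrank (ZMod 2) σ = 4 →
      Submodule.span (ZMod 2)
        ({x : Fin 5 → ZMod 2 | x ≠ 0 ∧ x 0 * x 0 + x 1 * x 2 + x 3 * x 4 = 0} ∩
          (σ : Set (Fin 5 → ZMod 2))) = σ := by
  exact ⟨card_quadS, span_quadS⟩
end
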